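/- Let φ(x₁,…,x_h) = c₁x₁ + ⋯ + c_hx_h be a linear form with coefficients in a field F, and suppose there exist disjoint subsets I₁, I₂ of {1,…,h}, not both empty, with Σ_{i∈I₁} cᵢ = Σ_{i∈I₂} cᵢ. Then no subset A of a vector space V over F with |A| ≥ 2 is a φ-Sidon set. -/

import Mathlib

lemma sidon_aux {F : Type*} [Field F] {V : Type*} [AddCommGroup V] [Module F V]
    {h : ℕ} (c : Fin h → F) (I : Finset (Fin h)) (u v : V) :
    ∑ i, c i • (if i ∈ I then u else v)
      = (∑ i ∈ I, c i) • (u - v) + (∑ i, c i) • v := by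
  have : ∀ i : Fin h, c i • (if i ∈ I then u else v)
      = (if i ∈ I then c i • (u - v) else 0) + c i • v := by
    intro i
    split <;> simp [smul_sub]
  simp only [this, Finset.sum_add_distrib, Finset.sum_ite_mem, Finset.univ_inter,
    ← Finset.sum_smul]

/-- If the coefficients of a linear form φ admit two disjoint, not both empty, index sets
with equal coefficient sums, then no subset of a vector space with at least two elements
is a φ-Sidon set. -/
theorem no_sidon_of_not_propertyN (F : Type*) [Field F] (V : Type*) [AddCommGroup V]
    [Module F V] (h : ℕ) (c : Fin h → F)
    (hobstruct : ∃ I₁ I₂ : Finset (Fin h), Disjoint I₁ I₂ ∧ (I₁ ∪ I₂).Nonempty ∧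
      ∑ i ∈ I₁, c i = ∑ i ∈ I₂, c i)
    (A : Set V) (hA : ∃ u ∈ A, ∃ v ∈ A, u ≠ v) :
    ¬ (∀ f g : Fin h → V, (∀ i, f i ∈ A) → (∀ i, g i ∈ A) →
        ∑ i, c i • f i = ∑ i, c i • g i → f = g) := by
  obtain ⟨I₁, I₂, hdisj, hne, hsum⟩ := hobstruct
  obtain ⟨u, hu, v, hv, huv⟩ := hA
  intro H
  have hfg := H (fun i => if i ∈ I₁ then u else v) (fun i => if i ∈ I₂ then u else v)
    (fun i => by split <;> assumption)
    (fun i => by split <;> assumption)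
    (by rw [sidon_aux c I₁ u v, sidon_aux c I₂ u v, hsum])
  obtain ⟨j, hj⟩ := hne
  have := congrFun hfg j
  rcases Finset.mem_union.mp hj with hj1 | hj2
  · have hj2 : j ∉ I₂ := Finset.disjoint_left.mp hdisj hj1
    simp only [if_pos hj1, if_neg hj2] at this
    exact huv this
  · have hj1 : j ∉ I₁ := Finset.disjoint_right.mp hdisj hj2
    simp only [if_neg hj1, if_pos hj2] at this
    exact huv this.symm
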